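/- Let E₈⁷ be the lattice of pairs (m₁,m₂) with either m₁,m₂ ∈ ℤ and m₁+m₂ even, or m₁,m₂ ∈ ℤ+1/2 and m₁+m₂ odd, with norm m₁²+7m₂². Then every norm-14 vector of E₈⁷ lies in 7(E₈⁷)', so the roots of E₈⁷ are the vectors of norm 2 and norm 14; the root system is the orthogonal sum of two A₁'s (one with roots of norm 2, one with roots of norm 14), and the sublattice generated by the roots has index 2 in E₈⁷. -/

import Mathlib

/-- The lattice `E₈⁷`: pairs `(m₁,m₂)` with `m₁,m₂ ∈ ℤ` and `m₁+m₂` even, or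
`m₁,m₂ ∈ ℤ+1/2` and `m₁+m₂` odd. -/
def E87 : Set (ℚ × ℚ) :=
  {v | ((∃ a : ℤ, v.1 = a) ∧ (∃ b : ℤ, v.2 = b) ∧ ∃ s : ℤ, v.1 + v.2 = 2 * s) ∨
    ((∃ a : ℤ, v.1 = a + 1 / 2) ∧ (∃ b : ℤ, v.2 = b + 1 / 2) ∧
      ∃ s : ℤ, v.1 + v.2 = 2 * s + 1)}

/-- The bilinear form of `E₈⁷`, with norm `m₁²+7m₂²`. -/
def B87 (v w : ℚ × ℚ) : ℚ := v.1 * w.1 + 7 * (v.2 * w.2)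

/-- The quadratic form (norm) of `E₈⁷`. -/
def Q87 (v : ℚ × ℚ) : ℚ := B87 v v

/-- The dual lattice `(E₈⁷)'`. -/
def dual87 : Set (ℚ × ℚ) := {w | ∀ v ∈ E87, ∃ k : ℤ, B87 v w = k}

/-- A root of `E₈⁷`: a primitive vector whose reflection preserves the lattice. -/
def IsRoot87 (v : ℚ × ℚ) : Prop :=
  v ∈ E87 ∧ v ≠ 0 ∧
    (∀ (k : ℤ) (w : ℚ × ℚ), w ∈ E87 → v = (k : ℚ) • w → k = 1 ∨ k = -1) ∧
    ∀ x ∈ E87, x - (2 * B87 x v / Q87 v) • v ∈ E87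

lemma mem_E87_iff (v : ℚ × ℚ) :
    v ∈ E87 ↔ ∃ a b : ℤ, v.1 = a / 2 + b ∧ v.2 = a / 2 - b := by
  constructor
  · rintro (⟨⟨x, hx⟩, ⟨y, hy⟩, ⟨s, hs⟩⟩ | ⟨⟨x, hx⟩, ⟨y, hy⟩, ⟨s, hs⟩⟩)
    · refine ⟨2 * s, s - y, ?_, ?_⟩ <;> push_cast <;> rw [hx, hy] at * <;> linarith
    · refine ⟨2 * s + 1, x - s, ?_, ?_⟩ <;> push_cast <;> rw [hx, hy] at * <;> linarith
  · rintro ⟨a, b, h1, h2⟩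
    rcases Int.even_or_odd a with ⟨t, ht⟩ | ⟨t, ht⟩
    · left
      refine ⟨⟨t + b, ?_⟩, ⟨t - b, ?_⟩, ⟨t, ?_⟩⟩ <;> (simp only [h1, h2]; push_cast [ht]; ring)
    · right
      refine ⟨⟨t + b, ?_⟩, ⟨t - b, ?_⟩, ⟨t, ?_⟩⟩ <;> (simp only [h1, h2]; push_cast [ht]; ring)
lemma Q87_coords (v : ℚ × ℚ) (a b : ℤ) (h1 : v.1 = a / 2 + b) (h2 : v.2 = a / 2 - b) :
    Q87 v = ((2 * a ^ 2 - 6 * a * b + 8 * b ^ 2 : ℤ) : ℚ) := by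
  simp only [Q87, B87, h1, h2]; push_cast; ring
lemma norm2_char (v : ℚ × ℚ) (hv : v ∈ E87) (hQ : Q87 v = 2) :
    v = (1/2, 1/2) ∨ v = (-(1/2), -(1/2)) := by
  obtain ⟨a, b, h1, h2⟩ := (mem_E87_iff v).1 hv
  have key : 2 * a ^ 2 - 6 * a * b + 8 * b ^ 2 = 2 := by
    have := (Q87_coords v a b h1 h2).symm.trans hQ
    exact_mod_cast this
  have hb : b = 0 := by nlinarith [sq_nonneg (2 * a - 3 * b), sq_nonneg b]
  subst hb
  have ha : a = 1 ∨ a = -1 := by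
    rcases Int.isUnit_iff.mp (IsUnit.of_mul_eq_one (a := a) a (by nlinarith)) with h | h <;> tauto
  rcases ha with rfl | rfl
  · left; rw [Prod.ext_iff]; norm_num [h1, h2]
  · right; rw [Prod.ext_iff]; norm_num [h1, h2]
lemma norm14_char (v : ℚ × ℚ) (hv : v ∈ E87) (hQ : Q87 v = 14) :
    v = (7/2, -(1/2)) ∨ v = (-(7/2), 1/2) := by
  obtain ⟨a, b, h1, h2⟩ := (mem_E87_iff v).1 hv
  have key : 2 * a ^ 2 - 6 * a * b + 8 * b ^ 2 = 14 := by
    have := (Q87_coords v a b h1 h2).symm.trans hQ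
    exact_mod_cast this
  have hb : -2 ≤ b ∧ b ≤ 2 := by
    constructor <;> nlinarith [sq_nonneg (2 * a - 3 * b)]
  have ha : -6 ≤ a ∧ a ≤ 6 := by
    constructor <;> nlinarith [sq_nonneg (2 * a - 3 * b), sq_nonneg b, sq_nonneg (b - 2), sq_nonneg (b + 2)]
  have : (a = 3 ∧ b = 2) ∨ (a = -3 ∧ b = -2) := by
    obtain ⟨hb1, hb2⟩ := hb; obtain ⟨ha1, ha2⟩ := ha
    interval_cases a <;> interval_cases b <;> omega
  rcases this with ⟨rfl, rfl⟩ | ⟨rfl, rfl⟩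
  · left; rw [Prod.ext_iff]; norm_num [h1, h2]
  · right; rw [Prod.ext_iff]; norm_num [h1, h2]
lemma e_mem : ((1/2, 1/2) : ℚ × ℚ) ∈ E87 := (mem_E87_iff _).2 ⟨1, 0, by norm_num, by norm_num⟩
lemma r_mem : ((7/2, -(1/2)) : ℚ × ℚ) ∈ E87 := (mem_E87_iff _).2 ⟨3, 2, by norm_num, by norm_num⟩
lemma f_mem : ((1, -1) : ℚ × ℚ) ∈ E87 := (mem_E87_iff _).2 ⟨0, 1, by norm_num, by norm_num⟩
lemma isRoot_e : IsRoot87 (1/2, 1/2) := by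
  refine ⟨e_mem, by simp [Prod.ext_iff], ?_, ?_⟩
  · rintro k w hw hkw
    obtain ⟨a, b, h1, h2⟩ := (mem_E87_iff w).1 hw
    rw [Prod.ext_iff] at hkw
    simp only [Prod.smul_fst, Prod.smul_snd, smul_eq_mul, h1, h2] at hkw
    have hka : (k : ℚ) * a = 1 := by
      have := hkw.1; have := hkw.2; linarith
    have : k * a = 1 := by exact_mod_cast hka
    rcases Int.isUnit_iff.mp (IsUnit.of_mul_eq_one (a := k) a this) with h | h <;> tauto
  · intro x hx
    obtain ⟨a, b, h1, h2⟩ := (mem_E87_iff x).1 hx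
    refine (mem_E87_iff _).2 ⟨3 * b - a, b, ?_, ?_⟩ <;>
      (simp only [Prod.fst_sub, Prod.snd_sub, Prod.smul_fst, Prod.smul_snd, smul_eq_mul,
        B87, Q87, h1, h2]; push_cast; norm_num [Q87, B87]; ring)
lemma isRoot_r : IsRoot87 (7/2, -(1/2)) := by
  refine ⟨r_mem, by simp [Prod.ext_iff], ?_, ?_⟩
  · rintro k w hw hkw
    obtain ⟨a, b, h1, h2⟩ := (mem_E87_iff w).1 hw
    rw [Prod.ext_iff] at hkw
    simp only [Prod.smul_fst, Prod.smul_snd, smul_eq_mul, h1, h2] at hkw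
    have hka : (k : ℚ) * (b + b - a) = 1 := by linear_combination 2 * hkw.2
    have : k * (b + b - a) = 1 := by exact_mod_cast hka
    rcases Int.isUnit_iff.mp (IsUnit.of_mul_eq_one (a := k) _ this) with h | h <;> tauto
  · intro x hx
    obtain ⟨a, b, h1, h2⟩ := (mem_E87_iff x).1 hx
    refine (mem_E87_iff _).2 ⟨a - 3 * b, -b, ?_, ?_⟩ <;>
      (simp only [Prod.fst_sub, Prod.snd_sub, Prod.smul_fst, Prod.smul_snd, smul_eq_mul,
        B87, Q87, h1, h2]; push_cast; norm_num [Q87, B87]; ring)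
lemma IsRoot87.neg {v : ℚ × ℚ} (h : IsRoot87 v) : IsRoot87 (-v) := by
  obtain ⟨hmem, hne, hprim, hrefl⟩ := h
  obtain ⟨a, b, h1, h2⟩ := (mem_E87_iff v).1 hmem
  refine ⟨(mem_E87_iff _).2 ⟨-a, -b, by push_cast; simp [h1]; ring, by push_cast; simp [h2]; ring⟩,
    neg_ne_zero.2 hne, ?_, ?_⟩
  · intro k w hw hkw
    have : v = ((-k : ℤ) : ℚ) • w := by push_cast; rw [neg_smul, ← hkw, neg_neg]
    rcases hprim (-k) w hw this with h | h <;> omega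
  · intro x hx
    have key := hrefl x hx
    have : x - (2 * B87 x (-v) / Q87 (-v)) • (-v) = x - (2 * B87 x v / Q87 v) • v := by
      have hB : B87 x (-v) = -B87 x v := by simp only [B87, Prod.fst_neg, Prod.snd_neg]; ring
      have hQQ : Q87 (-v) = Q87 v := by simp only [Q87, B87, Prod.fst_neg, Prod.snd_neg]; ring
      rw [hB, hQQ, mul_neg, neg_div, neg_smul, smul_neg, neg_neg]
    rwa [this]
lemma root_norm {v : ℚ × ℚ} (h : IsRoot87 v) : Q87 v = 2 ∨ Q87 v = 14 := by
  obtain ⟨hmem, hne, hprim, hrefl⟩ := h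
  obtain ⟨a, b, h1, h2⟩ := (mem_E87_iff v).1 hmem
  set D : ℤ := a ^ 2 - 3 * a * b + 4 * b ^ 2 with hD
  have habne : ¬(a = 0 ∧ b = 0) := by
    rintro ⟨rfl, rfl⟩
    exact hne (by rw [Prod.ext_iff]; norm_num [h1, h2])
  have hDpos : 0 < D := by
    rcases eq_or_ne b 0 with rfl | hb0
    · have ha0 : a ≠ 0 := by tauto
      have := Int.one_le_abs (show a ≠ 0 from ha0)
      nlinarith [sq_abs a, sq_nonneg a]
    · have := Int.one_le_abs hb0
      nlinarith [sq_abs b, sq_nonneg (2 * a - 3 * b), sq_nonneg b]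
  have hQD : Q87 v = 2 * (D : ℚ) := by
    rw [Q87_coords v a b h1 h2, hD]; push_cast; ring
  have hDQ : (D : ℚ) ≠ 0 := by exact_mod_cast hDpos.ne'
  -- coprimality
  have hcop : IsCoprime a b := by
    rw [Int.isCoprime_iff_gcd_eq_one]
    set g : ℕ := Int.gcd a b with hg
    have hgne : g ≠ 0 := by
      simp only [hg, Ne, Int.gcd_eq_zero_iff]; tauto
    have hga : (g : ℤ) ∣ a := Int.gcd_dvd_left a b
    have hgb : (g : ℤ) ∣ b := Int.gcd_dvd_right a b
    obtain ⟨a₀, ha₀⟩ := hga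
    obtain ⟨b₀, hb₀⟩ := hgb
    have hw : ((a₀ : ℚ) / 2 + b₀, (a₀ : ℚ) / 2 - b₀) ∈ E87 :=
      (mem_E87_iff _).2 ⟨a₀, b₀, rfl, rfl⟩
    have hv : v = ((g : ℤ) : ℚ) • ((a₀ : ℚ) / 2 + b₀, (a₀ : ℚ) / 2 - b₀) := by
      rw [Prod.ext_iff]
      simp only [Prod.smul_fst, Prod.smul_snd, smul_eq_mul, h1, h2, ha₀, hb₀]
      push_cast
      constructor <;> ring
    rcases hprim (g : ℤ) _ hw hv with h | h <;> omega
  -- reflection at e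
  obtain ⟨a', b', he1, he2⟩ := (mem_E87_iff _).1 (hrefl (1/2, 1/2) e_mem)
  obtain ⟨a'', b'', hf1, hf2⟩ := (mem_E87_iff _).1 (hrefl (1, -1) f_mem)
  have hBe : B87 (1/2, 1/2) v = ((2 * a - 3 * b : ℤ) : ℚ) := by
    simp only [B87, h1, h2]; push_cast; ring
  have hBf : B87 (1, -1) v = ((-3 * a + 8 * b : ℤ) : ℚ) := by
    simp only [B87, h1, h2]; push_cast; ring
  have hd1 : D ∣ (2 * a - 3 * b) * a := by
    refine ⟨1 - a', ?_⟩
    have H1 := he1; have H2 := he2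
    simp only [Prod.fst_sub, Prod.snd_sub, Prod.smul_fst, Prod.smul_snd, smul_eq_mul,
      hBe, hQD, h1, h2] at H1 H2
    have key : ((2 * a - 3 * b) * a : ℚ) = (D : ℚ) * (1 - a') := by
      field_simp at H1 H2; push_cast at H1 H2 ⊢; linarith
    exact_mod_cast key
  have hd2 : D ∣ (2 * a - 3 * b) * b := by
    refine ⟨-b', ?_⟩
    have H1 := he1; have H2 := he2
    simp only [Prod.fst_sub, Prod.snd_sub, Prod.smul_fst, Prod.smul_snd, smul_eq_mul,
      hBe, hQD, h1, h2] at H1 H2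
    have key : ((2 * a - 3 * b) * b : ℚ) = (D : ℚ) * (-b') := by
      field_simp at H1 H2; push_cast at H1 H2 ⊢; linarith
    exact_mod_cast key
  have hd3 : D ∣ (-3 * a + 8 * b) * a := by
    refine ⟨-a'', ?_⟩
    have H1 := hf1; have H2 := hf2
    simp only [Prod.fst_sub, Prod.snd_sub, Prod.smul_fst, Prod.smul_snd, smul_eq_mul,
      hBf, hQD, h1, h2] at H1 H2
    have key : ((-3 * a + 8 * b) * a : ℚ) = (D : ℚ) * (-a'') := by
      field_simp at H1 H2; push_cast at H1 H2 ⊢; linarith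
    exact_mod_cast key
  have hd4 : D ∣ (-3 * a + 8 * b) * b := by
    refine ⟨1 - b'', ?_⟩
    have H1 := hf1; have H2 := hf2
    simp only [Prod.fst_sub, Prod.snd_sub, Prod.smul_fst, Prod.smul_snd, smul_eq_mul,
      hBf, hQD, h1, h2] at H1 H2
    have key : ((-3 * a + 8 * b) * b : ℚ) = (D : ℚ) * (1 - b'') := by
      field_simp at H1 H2; push_cast at H1 H2 ⊢; linarith
    exact_mod_cast key
  have hda : D ∣ 7 * a ^ 2 := by
    have : (7 * a ^ 2 : ℤ) = 8 * ((2 * a - 3 * b) * a) + 3 * ((-3 * a + 8 * b) * a) := by ring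
    rw [this]; exact dvd_add (hd1.mul_left 8) (hd3.mul_left 3)
  have hdb : D ∣ 7 * b ^ 2 := by
    have : (7 * b ^ 2 : ℤ) = 3 * ((2 * a - 3 * b) * b) + 2 * ((-3 * a + 8 * b) * b) := by ring
    rw [this]; exact dvd_add (hd2.mul_left 3) (hd4.mul_left 2)
  have hd7 : D ∣ 7 := by
    obtain ⟨u, w, huw⟩ := hcop.pow (m := 2) (n := 2)
    have : (7 : ℤ) = u * (7 * a ^ 2) + w * (7 * b ^ 2) := by linear_combination 7 * huw.symm
    rw [this]; exact dvd_add (hda.mul_left u) (hdb.mul_left w)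
  have hD7 : D = 1 ∨ D = 7 := by
    have hle : D ≤ 7 := Int.le_of_dvd (by norm_num) hd7
    interval_cases D <;> omega
  rcases hD7 with h | h
  · left; rw [hQD, h]; norm_num
  · right; rw [hQD, h]; norm_num
lemma roots_iff (v : ℚ × ℚ) : IsRoot87 v ↔ v ∈ E87 ∧ (Q87 v = 2 ∨ Q87 v = 14) := by
  constructor
  · intro h
    exact ⟨h.1, root_norm h⟩
  · rintro ⟨hmem, hQ | hQ⟩
    · rcases norm2_char v hmem hQ with rfl | h
      · exact isRoot_e
      · have : v = -((1/2, 1/2) : ℚ × ℚ) := by rw [h, Prod.ext_iff]; norm_num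
        rw [this]; exact isRoot_e.neg
    · rcases norm14_char v hmem hQ with rfl | h
      · exact isRoot_r
      · have : v = -((7/2, -(1/2)) : ℚ × ℚ) := by rw [h, Prod.ext_iff]; norm_num
        rw [this]; exact isRoot_r.neg
lemma norm2_set : {v : ℚ × ℚ | v ∈ E87 ∧ Q87 v = 2} = {((1:ℚ)/2, (1:ℚ)/2), (-(1/2), -(1/2))} := by
  ext v
  constructor
  · rintro ⟨h1, h2⟩
    rcases norm2_char v h1 h2 with rfl | rfl <;> simp
  · rintro (rfl | rfl)
    · exact ⟨e_mem, by norm_num [Q87, B87]⟩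
    · refine ⟨(mem_E87_iff _).2 ⟨-1, 0, by norm_num, by norm_num⟩, by norm_num [Q87, B87]⟩
lemma norm14_set : {v : ℚ × ℚ | v ∈ E87 ∧ Q87 v = 14} = {((7:ℚ)/2, -((1:ℚ)/2)), (-(7/2), 1/2)} := by
  ext v
  constructor
  · rintro ⟨h1, h2⟩
    rcases norm14_char v h1 h2 with rfl | rfl <;> simp
  · rintro (rfl | rfl)
    · exact ⟨r_mem, by norm_num [Q87, B87]⟩
    · refine ⟨(mem_E87_iff _).2 ⟨-3, -2, by norm_num, by norm_num⟩, by norm_num [Q87, B87]⟩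
lemma part1 : ∀ v ∈ E87, Q87 v = 14 → (7 : ℚ)⁻¹ • v ∈ dual87 := by
  intro v hv hQ x hx
  obtain ⟨a, b, h1, h2⟩ := (mem_E87_iff x).1 hx
  rcases norm14_char v hv hQ with rfl | rfl
  · exact ⟨b, by simp only [B87, Prod.smul_fst, Prod.smul_snd, smul_eq_mul, h1, h2]; push_cast; ring⟩
  · exact ⟨-b, by simp only [B87, Prod.smul_fst, Prod.smul_snd, smul_eq_mul, h1, h2]; push_cast; ring⟩
lemma part5 : ∀ v ∈ E87, Q87 v = 2 → ∀ w ∈ E87, Q87 w = 14 → B87 v w = 0 := by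
  intro v hv hQv w hw hQw
  rcases norm2_char v hv hQv with rfl | rfl <;> rcases norm14_char w hw hQw with rfl | rfl <;>
    norm_num [B87]
def latt : AddSubgroup (ℚ × ℚ) where
  carrier := E87
  zero_mem' := (mem_E87_iff _).2 ⟨0, 0, by norm_num, by norm_num⟩
  add_mem' := by
    intro x y hx hy
    obtain ⟨a, b, h1, h2⟩ := (mem_E87_iff x).1 hx
    obtain ⟨c, d, h3, h4⟩ := (mem_E87_iff y).1 hy
    refine (mem_E87_iff _).2 ⟨a + c, b + d, ?_, ?_⟩ <;>
      simp only [Prod.fst_add, Prod.snd_add, h1, h2, h3, h4] <;> push_cast <;> ring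
  neg_mem' := by
    intro x hx
    obtain ⟨a, b, h1, h2⟩ := (mem_E87_iff x).1 hx
    refine (mem_E87_iff _).2 ⟨-a, -b, ?_, ?_⟩ <;>
      simp only [Prod.fst_neg, Prod.snd_neg, h1, h2] <;> push_cast <;> ring
def rootsub : AddSubgroup (ℚ × ℚ) where
  carrier := {x | ∃ a c : ℤ, x.1 = a / 2 + 2 * c ∧ x.2 = a / 2 - 2 * c}
  zero_mem' := ⟨0, 0, by norm_num, by norm_num⟩
  add_mem' := by
    rintro x y ⟨a, b, h1, h2⟩ ⟨c, d, h3, h4⟩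
    refine ⟨a + c, b + d, ?_, ?_⟩ <;>
      simp only [Prod.fst_add, Prod.snd_add, h1, h2, h3, h4] <;> push_cast <;> ring
  neg_mem' := by
    rintro x ⟨a, b, h1, h2⟩
    refine ⟨-a, -b, ?_, ?_⟩ <;>
      simp only [Prod.fst_neg, Prod.snd_neg, h1, h2] <;> push_cast <;> ring
lemma closure_E87 : AddSubgroup.closure E87 = latt := AddSubgroup.closure_eq latt
lemma roots_set : {v : ℚ × ℚ | IsRoot87 v} =
    {((1:ℚ)/2, (1:ℚ)/2), (-(1/2), -(1/2)), ((7:ℚ)/2, -((1:ℚ)/2)), (-(7/2), 1/2)} := by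
  ext v
  simp only [Set.mem_setOf_eq, roots_iff]
  constructor
  · rintro ⟨h1, h2 | h2⟩
    · rcases norm2_char v h1 h2 with rfl | rfl <;> simp
    · rcases norm14_char v h1 h2 with rfl | rfl <;> simp
  · rintro (rfl | rfl | rfl | rfl)
    · exact ⟨e_mem, Or.inl (by norm_num [Q87, B87])⟩
    · exact ⟨(mem_E87_iff _).2 ⟨-1, 0, by norm_num, by norm_num⟩, Or.inl (by norm_num [Q87, B87])⟩
    · exact ⟨r_mem, Or.inr (by norm_num [Q87, B87])⟩
    · exact ⟨(mem_E87_iff _).2 ⟨-3, -2, by norm_num, by norm_num⟩, Or.inr (by norm_num [Q87, B87])⟩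
lemma closure_roots : AddSubgroup.closure {v : ℚ × ℚ | IsRoot87 v} = rootsub := by
  rw [roots_set]
  apply le_antisymm
  · rw [AddSubgroup.closure_le]
    rintro v (rfl | rfl | rfl | rfl)
    · exact ⟨1, 0, by norm_num, by norm_num⟩
    · exact ⟨-1, 0, by norm_num, by norm_num⟩
    · exact ⟨3, 1, by norm_num, by norm_num⟩
    · exact ⟨-3, -1, by norm_num, by norm_num⟩
  · rintro x ⟨a, c, h1, h2⟩
    have he : ((1:ℚ)/2, (1:ℚ)/2) ∈ AddSubgroup.closure
        ({((1:ℚ)/2, (1:ℚ)/2), (-(1/2), -(1/2)), ((7:ℚ)/2, -((1:ℚ)/2)), (-(7/2), 1/2)} :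
          Set (ℚ × ℚ)) := AddSubgroup.subset_closure (by simp)
    have hr : ((7:ℚ)/2, -((1:ℚ)/2)) ∈ AddSubgroup.closure
        ({((1:ℚ)/2, (1:ℚ)/2), (-(1/2), -(1/2)), ((7:ℚ)/2, -((1:ℚ)/2)), (-(7/2), 1/2)} :
          Set (ℚ × ℚ)) := AddSubgroup.subset_closure (by simp)
    have hx : x = (a - 3 * c) • (((1:ℚ)/2, (1:ℚ)/2)) + c • (((7:ℚ)/2, -((1:ℚ)/2))) := by
      rw [Prod.ext_iff]
      simp only [Prod.fst_add, Prod.snd_add, Prod.smul_fst, Prod.smul_snd, h1, h2]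
      simp only [zsmul_eq_mul]
      push_cast
      constructor <;> ring
    rw [hx]
    exact AddSubgroup.add_mem _ (AddSubgroup.zsmul_mem _ he _) (AddSubgroup.zsmul_mem _ hr _)
lemma mem_rootsub_coords (a b : ℤ) (x : ℚ × ℚ) (h1 : x.1 = a / 2 + b) (h2 : x.2 = a / 2 - b) :
    x ∈ rootsub ↔ ∃ c : ℤ, b = 2 * c := by
  constructor
  · rintro ⟨a', c, g1, g2⟩
    refine ⟨c, ?_⟩
    have : (b : ℚ) = 2 * c := by
      rw [h1] at g1; rw [h2] at g2; linarith
    exact_mod_cast this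
  · rintro ⟨c, rfl⟩
    exact ⟨a, c, by rw [h1]; push_cast; ring, by rw [h2]; push_cast; ring⟩
lemma index_two : ((AddSubgroup.closure {v : ℚ × ℚ | IsRoot87 v}).addSubgroupOf
    (AddSubgroup.closure E87)).index = 2 := by
  rw [closure_roots, closure_E87]
  rw [AddSubgroup.index_eq_two_iff]
  refine ⟨⟨(1, -1), f_mem⟩, ?_⟩
  rintro ⟨x, hx⟩
  obtain ⟨a, b, h1, h2⟩ := (mem_E87_iff x).1 hx
  have hmem1 : (⟨x, hx⟩ + ⟨(1, -1), f_mem⟩ : latt) ∈ rootsub.addSubgroupOf latt ↔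
      ∃ c : ℤ, b + 1 = 2 * c := by
    rw [AddSubgroup.mem_addSubgroupOf]
    exact mem_rootsub_coords a (b + 1) _
      (by simp only [AddSubgroup.coe_add, Prod.fst_add, h1]; push_cast; ring)
      (by simp only [AddSubgroup.coe_add, Prod.snd_add, h2]; push_cast; ring)
  have hmem2 : (⟨x, hx⟩ : latt) ∈ rootsub.addSubgroupOf latt ↔ ∃ c : ℤ, b = 2 * c := by
    rw [AddSubgroup.mem_addSubgroupOf]
    exact mem_rootsub_coords a b _ h1 h2
  rw [hmem1, hmem2]  -- Xor' needs unfolding? Xor' over props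
  rcases Int.even_or_odd b with ⟨c, hc⟩ | ⟨c, hc⟩
  · exact Or.inr ⟨⟨c, by omega⟩, by rintro ⟨c', h⟩; omega⟩
  · exact Or.inl ⟨⟨c + 1, by omega⟩, by rintro ⟨c', h⟩; omega⟩

/-- Every norm-14 vector of `E₈⁷` lies in `7(E₈⁷)'`; the roots of `E₈⁷` are the vectors of
norm `2` and `14`; the root system is the orthogonal sum of two `A₁`'s (two roots of norm `2`
and two of norm `14`, mutually orthogonal); and the sublattice generated by the roots has
index `2` in `E₈⁷`. -/
theorem stmt12 :
    (∀ v ∈ E87, Q87 v = 14 → (7 : ℚ)⁻¹ • v ∈ dual87) ∧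
    (∀ v : ℚ × ℚ, IsRoot87 v ↔ v ∈ E87 ∧ (Q87 v = 2 ∨ Q87 v = 14)) ∧
    Set.ncard {v | v ∈ E87 ∧ Q87 v = 2} = 2 ∧
    Set.ncard {v | v ∈ E87 ∧ Q87 v = 14} = 2 ∧
    (∀ v ∈ E87, Q87 v = 2 → ∀ w ∈ E87, Q87 w = 14 → B87 v w = 0) ∧
    ((AddSubgroup.closure {v : ℚ × ℚ | IsRoot87 v}).addSubgroupOf
      (AddSubgroup.closure E87)).index = 2 := by
  refine ⟨part1, roots_iff, ?_, ?_, part5, index_two⟩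
  · rw [norm2_set]
    exact Set.ncard_pair (by norm_num [Prod.ext_iff])
  · rw [norm14_set]
    exact Set.ncard_pair (by norm_num [Prod.ext_iff])
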